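/- In a one-dimensional ISAC network with K nodes and nonempty sensing link set U(A), the sensing–throughput region is exactly R = {(s, f) : 0 ≤ f ≤ c_min and 0 ≤ s ≤ Σ_{u ∈ U(A)} c_u − |U(A)| · f}, where c_min := min_{1 ≤ j ≤ K−1} c_{{j,j+1}}. -/

import Mathlib

/-- An ISAC network on a finite node type `V`: a symmetric, irreflexive set of
directed links `E`, a source `Tx`, a sink `Rx`, a nonnegative capacity `c` on
undirected links (unordered pairs), and a sensing region `A`. -/
structure ISACNetwork (V : Type) [Fintype V] [DecidableEq V] where
  E : Finset (V × V)
  symm : ∀ i j : V, (i, j) ∈ E → (j, i) ∈ E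
  irrefl : ∀ i : V, (i, i) ∉ E
  Tx : V
  Rx : V
  TxNeRx : Tx ≠ Rx
  c : Sym2 V → ℝ
  c_nonneg : ∀ u : Sym2 V, 0 ≤ c u
  A : Finset V

namespace ISACNetwork

variable {V : Type} [Fintype V] [DecidableEq V]

/-- `E(A)`: directed links with both endpoints in the sensing region. -/
def EA (N : ISACNetwork V) : Finset (V × V) :=
  N.E.filter fun e => e.1 ∈ N.A ∧ e.2 ∈ N.A

/-- `U(A)`: undirected links with both endpoints in the sensing region. -/
def UA (N : ISACNetwork V) : Finset (Sym2 V) :=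
  N.EA.image Sym2.mk.uncurry

/-- A valid assignment of communication rates `f` and sensing rates `s`:
nonnegative rates for which there is a nonnegative capacity split `ca` of the
undirected link capacities with `f e + s e ≤ ca e` on each directed link, no
communication into the source or out of the sink, and flow conservation at
every intermediate node. -/
def Valid (N : ISACNetwork V) (f s : V × V → ℝ) : Prop :=
  (∀ e ∈ N.E, 0 ≤ f e) ∧ (∀ e ∈ N.E, 0 ≤ s e) ∧
  ∃ ca : V × V → ℝ,
    (∀ e ∈ N.E, 0 ≤ ca e) ∧
    (∀ i j : V, (i, j) ∈ N.E → ca (i, j) + ca (j, i) = N.c (Sym2.mk i j)) ∧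
    (∀ e ∈ N.E, f e + s e ≤ ca e) ∧
    (∀ i : V, (i, N.Tx) ∈ N.E → f (i, N.Tx) = 0) ∧
    (∀ j : V, (N.Rx, j) ∈ N.E → f (N.Rx, j) = 0) ∧
    (∀ j : V, j ≠ N.Tx → j ≠ N.Rx →
      ∑ i ∈ Finset.univ.filter (fun i => (i, j) ∈ N.E), f (i, j)
        = ∑ k ∈ Finset.univ.filter (fun k => (j, k) ∈ N.E), f (j, k))

/-- The sensing fidelity achieved by a sensing-rate assignment. -/
def sensOf (N : ISACNetwork V) (s : V × V → ℝ) : ℝ := ∑ e ∈ N.EA, s e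

/-- The throughput achieved by a communication-rate assignment. -/
def flowOf (N : ISACNetwork V) (f : V × V → ℝ) : ℝ :=
  ∑ j ∈ Finset.univ.filter (fun j => (N.Tx, j) ∈ N.E), f (N.Tx, j)

/-- The sensing–throughput region: all pairs `(s, f)` achieved by a valid
assignment. -/
def Region (N : ISACNetwork V) : Set (ℝ × ℝ) :=
  { p | ∃ fr sr : V × V → ℝ, N.Valid fr sr ∧ N.sensOf sr = p.1 ∧ N.flowOf fr = p.2 }

end ISACNetwork

/-- The one-dimensional ISAC network with `K ≥ 2` nodes: nodes `0, …, K-1`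
(standing for `1, …, K`), links between consecutive nodes in both directions,
source node `0` and sink node `K-1`. -/
def pathNetwork (K : ℕ) (hK : 2 ≤ K) (cap : Sym2 (Fin K) → ℝ)
    (hcap : ∀ u, 0 ≤ cap u) (A : Finset (Fin K)) : ISACNetwork (Fin K) where
  E := Finset.univ.filter fun e : Fin K × Fin K =>
    e.1.val + 1 = e.2.val ∨ e.2.val + 1 = e.1.val
  symm := by
    intro i j h
    simp only [Finset.mem_filter, Finset.mem_univ, true_and] at h ⊢
    tauto
  irrefl := by
    intro i h
    simp only [Finset.mem_filter, Finset.mem_univ, true_and] at h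
    omega
  Tx := ⟨0, by omega⟩
  Rx := ⟨K - 1, by omega⟩
  TxNeRx := by
    rw [Fin.ne_iff_vne]
    simp only [ne_eq]
    omega
  c := cap
  c_nonneg := hcap
  A := A

/-- `c_min`: the smallest undirected link capacity of the one-dimensional
ISAC network, `min_{1 ≤ j ≤ K-1} c_{{j,j+1}}`. -/
noncomputable def cmin (K : ℕ) (hK : 2 ≤ K) (cap : Sym2 (Fin K) → ℝ) : ℝ :=
  (Finset.univ : Finset (Fin (K - 1))).inf'
    (Finset.univ_nonempty_iff.mpr ⟨⟨0, by omega⟩⟩)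
    (fun j => cap (Sym2.mk ⟨j.val, by have := j.isLt; omega⟩
      ⟨j.val + 1, by have := j.isLt; omega⟩))

section Aux

variable {K : ℕ}

/-- the forward directed link `(j, j+1)` -/
def pfwd (j : Fin (K - 1)) : Fin K × Fin K :=
  (⟨j.val, by have := j.isLt; omega⟩, ⟨j.val + 1, by have := j.isLt; omega⟩)

/-- the backward directed link `(j+1, j)` -/
def pbwd (j : Fin (K - 1)) : Fin K × Fin K := ((pfwd j).2, (pfwd j).1)

/-- indices of links with both endpoints in the sensing region -/
def JA (K : ℕ) (A : Finset (Fin K)) : Finset (Fin (K - 1)) :=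
  Finset.univ.filter fun j => (pfwd j).1 ∈ A ∧ (pfwd j).2 ∈ A

variable (hK : 2 ≤ K) (cap : Sym2 (Fin K) → ℝ) (hcap : ∀ u, 0 ≤ cap u)
  (A : Finset (Fin K))

lemma mem_pathE (e : Fin K × Fin K) :
    e ∈ (pathNetwork K hK cap hcap A).E ↔
      e.1.val + 1 = e.2.val ∨ e.2.val + 1 = e.1.val := by
  simp [pathNetwork]

lemma pfwd_mem_pathE (j : Fin (K - 1)) :
    pfwd j ∈ (pathNetwork K hK cap hcap A).E := by
  rw [mem_pathE]; left; rfl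

lemma pbwd_mem_pathE (j : Fin (K - 1)) :
    pbwd j ∈ (pathNetwork K hK cap hcap A).E := by
  rw [mem_pathE]; right; rfl

lemma EA_eq :
    (pathNetwork K hK cap hcap A).EA = (JA K A).image pfwd ∪ (JA K A).image pbwd := by
  ext e
  simp only [ISACNetwork.EA, Finset.mem_filter, mem_pathE, Finset.mem_union,
    Finset.mem_image, JA, Finset.mem_filter, Finset.mem_univ, true_and]
  constructor
  · rintro ⟨h1 | h2, hA1, hA2⟩
    · left
      have hlt : e.1.val < K - 1 := by have := e.2.isLt; omega
      refine ⟨⟨e.1.val, hlt⟩, ⟨?_, ?_⟩, ?_⟩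
      · show (⟨e.1.val, _⟩ : Fin K) ∈ A
        have : (⟨e.1.val, by omega⟩ : Fin K) = e.1 := by apply Fin.ext; rfl
        rwa [this]
      · show (⟨e.1.val + 1, _⟩ : Fin K) ∈ A
        have : (⟨e.1.val + 1, by omega⟩ : Fin K) = e.2 := by apply Fin.ext; exact h1
        rwa [this]
      · unfold pfwd
        refine Prod.ext (by apply Fin.ext; rfl) (by apply Fin.ext; exact h1)
    · right
      have hlt : e.2.val < K - 1 := by have := e.1.isLt; omega
      refine ⟨⟨e.2.val, hlt⟩, ⟨?_, ?_⟩, ?_⟩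
      · show (⟨e.2.val, _⟩ : Fin K) ∈ A
        have : (⟨e.2.val, by omega⟩ : Fin K) = e.2 := by apply Fin.ext; rfl
        rwa [this]
      · show (⟨e.2.val + 1, _⟩ : Fin K) ∈ A
        have : (⟨e.2.val + 1, by omega⟩ : Fin K) = e.1 := by apply Fin.ext; exact h2
        rwa [this]
      · unfold pbwd pfwd
        refine Prod.ext (by apply Fin.ext; exact h2) (by apply Fin.ext; rfl)
  · rintro (⟨j, ⟨hA1, hA2⟩, rfl⟩ | ⟨j, ⟨hA1, hA2⟩, rfl⟩)
    · exact ⟨Or.inl rfl, hA1, hA2⟩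
    · exact ⟨Or.inr rfl, hA2, hA1⟩

lemma pfwd_injOn : Set.InjOn (pfwd (K := K)) (JA K A) := by
  intro a _ b _ h
  have := congrArg (fun e => (e : Fin K × Fin K).1.val) h
  exact Fin.ext this

lemma fwd_bwd_disj : Disjoint ((JA K A).image pfwd) ((JA K A).image pbwd) := by
  rw [Finset.disjoint_left]
  rintro e he he'
  simp only [Finset.mem_image] at he he'
  obtain ⟨a, _, rfl⟩ := he
  obtain ⟨b, _, hb⟩ := he'
  have h1 := congrArg (fun e => (e : Fin K × Fin K).1.val) hb
  have h2 := congrArg (fun e => (e : Fin K × Fin K).2.val) hb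
  simp only [pbwd, pfwd] at h1 h2
  omega

lemma sum_EA (g : Fin K × Fin K → ℝ) :
    ∑ e ∈ (pathNetwork K hK cap hcap A).EA, g e
      = ∑ j ∈ JA K A, (g (pfwd j) + g (pbwd j)) := by
  rw [EA_eq, Finset.sum_union (fwd_bwd_disj A),
    Finset.sum_image (fun a ha b hb h => pfwd_injOn A ha hb h),
    Finset.sum_image, ← Finset.sum_add_distrib]
  intro a _ b _ h
  have := congrArg (fun e => (e : Fin K × Fin K).2.val) h
  simp only [pbwd, pfwd] at this
  exact Fin.ext this

lemma UA_eq :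
    (pathNetwork K hK cap hcap A).UA = (JA K A).image (fun j => Sym2.mk.uncurry (pfwd j)) := by
  rw [ISACNetwork.UA, EA_eq, Finset.image_union, Finset.image_image, Finset.image_image]
  have : (Sym2.mk.uncurry ∘ pbwd : Fin (K-1) → Sym2 (Fin K)) = Sym2.mk.uncurry ∘ pfwd := by
    funext j
    exact Sym2.eq_swap
  rw [this, Finset.union_self]
  rfl

lemma sym2_pfwd_injOn :
    Set.InjOn (fun j => Sym2.mk.uncurry (pfwd (K := K) j)) (JA K A) := by
  intro a _ b _ h
  change Sym2.mk (pfwd a).1 (pfwd a).2 = Sym2.mk (pfwd b).1 (pfwd b).2 at h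
  rw [Sym2.eq_iff] at h
  rcases h with ⟨h1, h2⟩ | ⟨h1, h2⟩
  · have h3 : a.val = b.val := congrArg (fun x : Fin K => x.val) h1
    exact Fin.ext h3
  · have h3 : a.val = b.val + 1 := congrArg Fin.val h1
    have h4 : a.val + 1 = b.val := congrArg Fin.val h2
    omega

lemma sum_UA (g : Sym2 (Fin K) → ℝ) :
    ∑ u ∈ (pathNetwork K hK cap hcap A).UA, g u
      = ∑ j ∈ JA K A, g (Sym2.mk.uncurry (pfwd j)) := by
  rw [UA_eq, Finset.sum_image (fun a ha b hb h => sym2_pfwd_injOn A ha hb h)]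

lemma card_UA :
    (pathNetwork K hK cap hcap A).UA.card = (JA K A).card := by
  rw [UA_eq, Finset.card_image_of_injOn (sym2_pfwd_injOn A)]

lemma cmin_le (j : Fin (K - 1)) : cmin K hK cap ≤ cap (Sym2.mk.uncurry (pfwd j)) :=
  Finset.inf'_le _ (Finset.mem_univ j)

lemma filter_Tx :
    Finset.univ.filter (fun j : Fin K =>
        ((pathNetwork K hK cap hcap A).Tx, j) ∈ (pathNetwork K hK cap hcap A).E)
      = {(⟨1, by omega⟩ : Fin K)} := by
  ext j
  simp only [Finset.mem_filter, Finset.mem_univ, true_and, mem_pathE,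
    Finset.mem_singleton, Fin.ext_iff]
  show (0 + 1 = j.val ∨ j.val + 1 = 0) ↔ j.val = 1
  omega

lemma flowOf_path (fr : Fin K × Fin K → ℝ) :
    (pathNetwork K hK cap hcap A).flowOf fr
      = fr (⟨0, by omega⟩, ⟨1, by omega⟩) := by
  rw [ISACNetwork.flowOf, filter_Tx hK cap hcap A, Finset.sum_singleton]
  rfl

lemma filter_in (j : Fin K) (h1 : 1 ≤ j.val) (h2 : j.val + 1 ≤ K - 1) :
    Finset.univ.filter (fun i : Fin K => (i, j) ∈ (pathNetwork K hK cap hcap A).E)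
      = {(⟨j.val - 1, by omega⟩ : Fin K), ⟨j.val + 1, by omega⟩} := by
  ext i
  simp only [Finset.mem_filter, Finset.mem_univ, true_and, mem_pathE,
    Finset.mem_insert, Finset.mem_singleton, Fin.ext_iff]
  show (i.val + 1 = j.val ∨ j.val + 1 = i.val) ↔ _
  omega

lemma filter_out (j : Fin K) (h1 : 1 ≤ j.val) (h2 : j.val + 1 ≤ K - 1) :
    Finset.univ.filter (fun k : Fin K => (j, k) ∈ (pathNetwork K hK cap hcap A).E)
      = {(⟨j.val - 1, by omega⟩ : Fin K), ⟨j.val + 1, by omega⟩} := by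
  ext i
  simp only [Finset.mem_filter, Finset.mem_univ, true_and, mem_pathE,
    Finset.mem_insert, Finset.mem_singleton, Fin.ext_iff]
  show (j.val + 1 = i.val ∨ i.val + 1 = j.val) ↔ _
  omega

lemma flow_diff (fr : Fin K × Fin K → ℝ)
    (hTx : ∀ i, (i, (pathNetwork K hK cap hcap A).Tx) ∈ (pathNetwork K hK cap hcap A).E →
      fr (i, (pathNetwork K hK cap hcap A).Tx) = 0)
    (hcons : ∀ j : Fin K, j ≠ (pathNetwork K hK cap hcap A).Tx →
        j ≠ (pathNetwork K hK cap hcap A).Rx →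
      ∑ i ∈ Finset.univ.filter (fun i => (i, j) ∈ (pathNetwork K hK cap hcap A).E), fr (i, j)
        = ∑ k ∈ Finset.univ.filter (fun k => (j, k) ∈ (pathNetwork K hK cap hcap A).E), fr (j, k)) :
    ∀ n (h : n + 1 < K),
      fr (⟨n, by omega⟩, ⟨n + 1, h⟩) - fr (⟨n + 1, h⟩, ⟨n, by omega⟩)
        = (pathNetwork K hK cap hcap A).flowOf fr := by
  intro n
  induction n with
  | zero =>
    intro h
    rw [flowOf_path hK cap hcap A]
    have h0 : fr (⟨1, h⟩, (⟨0, by omega⟩ : Fin K)) = 0 := by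
      apply hTx
      rw [mem_pathE]
      right
      rfl
    rw [h0]
    ring
  | succ n ih =>
    intro h
    have hn : n + 1 < K := by omega
    have hc := hcons ⟨n + 1, hn⟩ (by simp [pathNetwork, Fin.ext_iff])
      (by simp only [pathNetwork, ne_eq, Fin.ext_iff]; omega)
    rw [filter_in hK cap hcap A ⟨n + 1, hn⟩ (by simp) (by simp; omega),
      filter_out hK cap hcap A ⟨n + 1, hn⟩ (by simp) (by simp; omega)] at hc
    have hne : (⟨(n + 1) - 1, by omega⟩ : Fin K) ≠ ⟨(n + 1) + 1, by omega⟩ := by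
      simp only [ne_eq, Fin.ext_iff]; omega
    rw [Finset.sum_pair hne, Finset.sum_pair hne] at hc
    have ihh := ih hn
    have e1 : fr ((⟨(n+1) - 1, by omega⟩ : Fin K), ⟨n + 1, hn⟩)
        = fr (⟨n, by omega⟩, ⟨n + 1, hn⟩) := rfl
    have e2 : fr ((⟨n + 1, hn⟩ : Fin K), ⟨(n+1) - 1, by omega⟩)
        = fr (⟨n + 1, hn⟩, ⟨n, by omega⟩) := rfl
    rw [e1, e2] at hc
    rw [← ihh]
    have e3 : fr ((⟨(n+1) + 1, by omega⟩ : Fin K), ⟨n + 1, hn⟩)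
        = fr (⟨n + 1 + 1, h⟩, ⟨n + 1, by omega⟩) := rfl
    have e4 : fr ((⟨n + 1, hn⟩ : Fin K), ⟨(n+1) + 1, by omega⟩)
        = fr (⟨n + 1, by omega⟩, ⟨n + 1 + 1, h⟩) := rfl
    rw [e3, e4] at hc
    linarith

end Aux

/-- The sensing–throughput region of a one-dimensional ISAC network with
nonempty sensing link set `U(A)` is exactly
`{(s, f) : 0 ≤ f ≤ c_min, 0 ≤ s ≤ Σ_{u ∈ U(A)} c_u − |U(A)| · f}`. -/
theorem oneD_region {K : ℕ} (hK : 2 ≤ K) (cap : Sym2 (Fin K) → ℝ)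
    (hcap : ∀ u, 0 ≤ cap u) (A : Finset (Fin K))
    (hUA : (pathNetwork K hK cap hcap A).UA.Nonempty) :
    (pathNetwork K hK cap hcap A).Region =
      { p : ℝ × ℝ | 0 ≤ p.2 ∧ p.2 ≤ cmin K hK cap ∧ 0 ≤ p.1 ∧
          p.1 ≤ ∑ u ∈ (pathNetwork K hK cap hcap A).UA, cap u
            - ((pathNetwork K hK cap hcap A).UA.card : ℝ) * p.2 } := by
  ext p
  simp only [ISACNetwork.Region, Set.mem_setOf_eq]
  constructor
  · rintro ⟨fr, sr, ⟨hf0, hs0, ca, hca0, hsplit, hfs, hTx, hRx, hcons⟩, hs, hf⟩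
    have hdj : ∀ j : Fin (K-1), fr (pfwd j) - fr (pbwd j)
        = (pathNetwork K hK cap hcap A).flowOf fr :=
      fun j => flow_diff hK cap hcap A fr hTx hcons j.val (by have := j.isLt; omega)
    have hlink : ∀ j : Fin (K-1), ca (pfwd j) + ca (pbwd j) = cap (Sym2.mk.uncurry (pfwd j)) :=
      fun j => hsplit (pfwd j).1 (pfwd j).2 (pfwd_mem_pathE hK cap hcap A j)
    rw [← hs, ← hf]
    refine ⟨?_, ?_, ?_, ?_⟩
    · rw [flowOf_path hK cap hcap A]
      exact hf0 _ (by rw [mem_pathE]; exact Or.inl rfl)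
    · apply Finset.le_inf'
      intro j _
      show (pathNetwork K hK cap hcap A).flowOf fr ≤ cap (Sym2.mk.uncurry (pfwd j))
      have h1 := hdj j
      have h2 := hfs (pfwd j) (pfwd_mem_pathE hK cap hcap A j)
      have h3 := hf0 (pbwd j) (pbwd_mem_pathE hK cap hcap A j)
      have h4 := hs0 (pfwd j) (pfwd_mem_pathE hK cap hcap A j)
      have h5 := hca0 (pbwd j) (pbwd_mem_pathE hK cap hcap A j)
      have h6 := hlink j
      linarith
    · apply Finset.sum_nonneg
      intro e he
      exact hs0 e (Finset.mem_filter.mp he).1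
    · rw [ISACNetwork.sensOf, sum_EA hK cap hcap A sr, sum_UA hK cap hcap A cap,
        card_UA hK cap hcap A]
      have hconst : ((JA K A).card : ℝ) * (pathNetwork K hK cap hcap A).flowOf fr
          = ∑ _j ∈ JA K A, (pathNetwork K hK cap hcap A).flowOf fr := by
        rw [Finset.sum_const, nsmul_eq_mul]
      rw [hconst, ← Finset.sum_sub_distrib]
      apply Finset.sum_le_sum
      intro j _
      have h1 := hdj j
      have h2 := hfs (pfwd j) (pfwd_mem_pathE hK cap hcap A j)
      have h2' := hfs (pbwd j) (pbwd_mem_pathE hK cap hcap A j)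
      have h3 := hf0 (pbwd j) (pbwd_mem_pathE hK cap hcap A j)
      have h6 := hlink j
      linarith
  · rintro ⟨hf0, hfc, hs0, hsb⟩
    set S : ℝ := ∑ j ∈ JA K A, (cap (Sym2.mk.uncurry (pfwd j)) - p.2) with hSdef
    have hcge : ∀ a b : Fin K, a.val + 1 = b.val → p.2 ≤ cap (Sym2.mk.uncurry (a, b)) := by
      intro a b hab
      have hlt : a.val < K - 1 := by have := b.isLt; omega
      have hpe : pfwd ⟨a.val, hlt⟩ = (a, b) :=
        Prod.ext (Fin.ext rfl) (Fin.ext hab)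
      calc p.2 ≤ cmin K hK cap := hfc
        _ ≤ cap (Sym2.mk.uncurry (pfwd ⟨a.val, hlt⟩)) := cmin_le hK cap ⟨a.val, hlt⟩
        _ = cap (Sym2.mk.uncurry (a, b)) := by rw [hpe]
    have hS0 : 0 ≤ S := by
      apply Finset.sum_nonneg
      intro j _
      have := hcge (pfwd j).1 (pfwd j).2 rfl
      linarith
    have hsS : p.1 ≤ S := by
      rw [hSdef, Finset.sum_sub_distrib, Finset.sum_const, nsmul_eq_mul]
      calc p.1 ≤ ∑ u ∈ (pathNetwork K hK cap hcap A).UA, cap u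
            - ((pathNetwork K hK cap hcap A).UA.card : ℝ) * p.2 := hsb
        _ = _ := by rw [sum_UA hK cap hcap A cap, card_UA hK cap hcap A]
    refine ⟨fun e => if e.1.val + 1 = e.2.val then p.2 else 0,
      fun e => if e.1.val + 1 = e.2.val ∧ e.1 ∈ A ∧ e.2 ∈ A then
        (if S = 0 then 0 else p.1 * (cap (Sym2.mk.uncurry e) - p.2) / S) else 0,
      ⟨?_, ?_, ⟨fun e => if e.1.val + 1 = e.2.val then cap (Sym2.mk.uncurry e) else 0,
        ?_, ?_, ?_, ?_, ?_, ?_⟩⟩, ?_, ?_⟩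
    · intro e _
      dsimp only
      split <;> [exact hf0; exact le_refl 0]
    · intro e _
      dsimp only
      split
      · rename_i hcond
        split
        · exact le_refl 0
        · rename_i hSne
          have hSpos : 0 < S := lt_of_le_of_ne hS0 (Ne.symm hSne)
          have := hcge e.1 e.2 hcond.1
          have he : (e.1, e.2) = e := rfl
          rw [he] at this
          exact div_nonneg (mul_nonneg hs0 (by linarith)) (le_of_lt hSpos)
      · exact le_refl 0
    · intro e _
      dsimp only
      split
      · exact hcap _
      · exact le_refl 0
    · intro i j hij
      rw [mem_pathE] at hij
      replace hij : i.val + 1 = j.val ∨ j.val + 1 = i.val := hij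
      dsimp only
      rcases hij with h | h
      · rw [if_pos h, if_neg (by omega), add_zero]
        rfl
      · rw [if_neg (by omega), if_pos h, zero_add]
        exact congrArg cap Sym2.eq_swap
    · intro e he
      rw [mem_pathE] at he
      dsimp only
      rcases he with h | h
      · rw [if_pos h, if_pos h]
        have hc := hcge e.1 e.2 h
        have hee : (e.1, e.2) = e := rfl
        rw [hee] at hc
        split
        · rename_i hcond
          split
          · linarith
          · rename_i hSne
            have hSpos : 0 < S := lt_of_le_of_ne hS0 (Ne.symm hSne)
            have key : p.1 * (cap (Sym2.mk.uncurry e) - p.2) / S ≤ cap (Sym2.mk.uncurry e) - p.2 := by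
              rw [div_le_iff₀ hSpos]
              nlinarith
            linarith
        · linarith
      · have h1 : ¬ (e.1.val + 1 = e.2.val) := by omega
        rw [if_neg h1,
          if_neg (fun hcond : e.1.val + 1 = e.2.val ∧ e.1 ∈ A ∧ e.2 ∈ A => h1 hcond.1),
          if_neg h1]
        norm_num
    · intro i hi
      dsimp only
      rw [if_neg]
      show ¬ (i.val + 1 = 0)
      omega
    · intro j hj
      dsimp only
      rw [if_neg]
      show ¬ (K - 1 + 1 = j.val)
      have := j.isLt
      omega
    · intro j hjT hjR
      have hTxv : ((pathNetwork K hK cap hcap A).Tx).val = 0 := rfl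
      have hRxv : ((pathNetwork K hK cap hcap A).Rx).val = K - 1 := rfl
      have hjT' : j.val ≠ 0 := fun h => hjT (Fin.ext (by rw [hTxv]; exact h))
      have hjR' : j.val ≠ K - 1 := fun h => hjR (Fin.ext (by rw [hRxv]; exact h))
      have hjlt := j.isLt
      have hj1 : 1 ≤ j.val := by omega
      have hj2 : j.val + 1 ≤ K - 1 := by omega
      rw [filter_in hK cap hcap A j hj1 hj2, filter_out hK cap hcap A j hj1 hj2,
        Finset.sum_pair (by simp only [ne_eq, Fin.ext_iff]; omega),
        Finset.sum_pair (by simp only [ne_eq, Fin.ext_iff]; omega)]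
      dsimp only
      rw [if_pos (by omega), if_neg (by omega), if_neg (by omega), if_pos (by omega)]
      ring
    · rw [ISACNetwork.sensOf, sum_EA hK cap hcap A]
      have hbwd : ∀ j : Fin (K - 1),
          (if (pbwd j).1.val + 1 = (pbwd j).2.val ∧ (pbwd j).1 ∈ A ∧ (pbwd j).2 ∈ A then
            (if S = 0 then 0 else p.1 * (cap (Sym2.mk.uncurry (pbwd j)) - p.2) / S) else 0) = 0 := by
        intro j
        rw [if_neg]
        simp only [not_and]
        intro h
        exfalso
        have : (pbwd j).1.val = j.val + 1 := rfl
        have : (pbwd j).2.val = j.val := rfl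
        omega
      calc ∑ j ∈ JA K A, ((if (pfwd j).1.val + 1 = (pfwd j).2.val ∧ (pfwd j).1 ∈ A ∧ (pfwd j).2 ∈ A then
            (if S = 0 then 0 else p.1 * (cap (Sym2.mk.uncurry (pfwd j)) - p.2) / S) else 0)
          + (if (pbwd j).1.val + 1 = (pbwd j).2.val ∧ (pbwd j).1 ∈ A ∧ (pbwd j).2 ∈ A then
            (if S = 0 then 0 else p.1 * (cap (Sym2.mk.uncurry (pbwd j)) - p.2) / S) else 0))
          = ∑ j ∈ JA K A, (if S = 0 then 0 else p.1 * (cap (Sym2.mk.uncurry (pfwd j)) - p.2) / S) := by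
            apply Finset.sum_congr rfl
            intro j hj
            rw [hbwd j, add_zero, if_pos]
            refine ⟨rfl, ?_, ?_⟩
            · exact ((Finset.mem_filter.mp hj).2).1
            · exact ((Finset.mem_filter.mp hj).2).2
        _ = p.1 := by
            by_cases hSz : S = 0
            · rw [Finset.sum_congr rfl fun j _ => if_pos hSz, Finset.sum_const,
                smul_zero]
              linarith
            · rw [Finset.sum_congr rfl fun j _ => if_neg hSz,
                ← Finset.sum_div, ← Finset.mul_sum, ← hSdef,
                mul_div_assoc, div_self hSz, mul_one]
    · rw [flowOf_path hK cap hcap A]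
      show (if (0 : ℕ) + 1 = 1 then p.2 else 0) = p.2
      norm_num
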